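/- Let (X,d) be a metric space and let u, v be normal fuzzy sets in X all of whose level sets [u]_α, [v]_α (α ∈ (0,1]) are nonempty compact. Then the function α ↦ H([u]_α, [v]_α) is left continuous at every α ∈ (0,1]. -/

import Mathlib

open Set Filter ENNReal

private lemma key_left {X : Type*} [MetricSpace X] (w : X → ℝ)
    (hw : ∀ α ∈ Set.Ioc (0 : ℝ) 1, {x | α ≤ w x}.Nonempty ∧ IsCompact {x | α ≤ w x})
    {α : ℝ} (hα : α ∈ Set.Ioc (0 : ℝ) 1) {ε : ℝ≥0∞} (hε : 0 < ε) :
    ∀ᶠ β in nhdsWithin α (Set.Ioo 0 α),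
      EMetric.hausdorffEdist {x | β ≤ w x} {x | α ≤ w x} ≤ ε := by
  obtain ⟨δ, δpos, hδ⟩ : ∃ δ : ℝ, 0 < δ ∧ ENNReal.ofReal δ ≤ ε := by
    rcases eq_or_ne ε ⊤ with h | h
    · exact ⟨1, one_pos, by simp [h]⟩
    · exact ⟨ε.toReal, ENNReal.toReal_pos hε.ne' h, by rw [ENNReal.ofReal_toReal h]⟩
  set K := {x | α ≤ w x} with hK
  set U := Metric.thickening δ K with hU
  have hKU : K ⊆ U := Metric.self_subset_thickening δpos K
  set β' : ℕ → ℝ := fun n => α - (α / 2) / (n + 1) with hβ'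
  have hαpos : 0 < α := hα.1
  have hβ'mem : ∀ n, β' n ∈ Set.Ioc (0 : ℝ) 1 := by
    intro n
    have h1 : (α / 2) / (n + 1 : ℝ) ≤ α / 2 := by
      apply div_le_self (by positivity)
      have : (0:ℝ) ≤ (n:ℝ) := Nat.cast_nonneg n
      linarith
    have h2 : (0:ℝ) < (α / 2) / (n + 1 : ℝ) := by positivity
    constructor
    · simp only [hβ']; linarith
    · simp only [hβ']; linarith [hα.2]
  have hβ'lt : ∀ n, β' n < α := by
    intro n
    have h2 : (0:ℝ) < (α / 2) / (n + 1 : ℝ) := by positivity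
    simp only [hβ']; linarith
  have hβ'mono : Monotone β' := by
    intro n m hnm
    simp only [hβ']
    have : (α / 2) / (m + 1 : ℝ) ≤ (α / 2) / (n + 1 : ℝ) := by
      apply div_le_div_of_nonneg_left (by positivity) (by positivity)
      exact_mod_cast by exact_mod_cast add_le_add_left (Nat.cast_le.2 hnm) 1
    linarith
  have htend : Tendsto β' atTop (nhds α) := by
    have h1 : Tendsto (fun n : ℕ => (α / 2) * (1 / ((n:ℝ) + 1))) atTop (nhds 0) := by
      simpa using tendsto_one_div_add_atTop_nhds_zero_nat.const_mul (α / 2)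
    have h2 := tendsto_const_nhds.sub h1 (f := fun _ : ℕ => α)
    simpa [hβ', mul_one_div, div_eq_mul_inv] using h2
  -- find n with level set at β' n inside U
  obtain ⟨n, hn⟩ : ∃ n, ¬ ({x | β' n ≤ w x} ∩ Uᶜ).Nonempty := by
    by_contra hcon
    push_neg at hcon
    set t : ℕ → Set X := fun n => {x | β' n ≤ w x} ∩ Uᶜ with ht
    have hclosed : ∀ n, IsClosed (t n) := fun n =>
      ((hw _ (hβ'mem n)).2.isClosed).inter (Metric.isOpen_thickening).isClosed_compl
    have hsub : ∀ n, t (n + 1) ⊆ t n := by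
      intro n x hx
      exact ⟨le_trans (hβ'mono (Nat.le_succ n)) hx.1, hx.2⟩
    have hcpt : IsCompact (t 0) :=
      ((hw _ (hβ'mem 0)).2).inter_right (Metric.isOpen_thickening).isClosed_compl
    obtain ⟨x, hx⟩ := IsCompact.nonempty_iInter_of_sequence_nonempty_isCompact_isClosed
      t hsub hcon hcpt hclosed
    simp only [Set.mem_iInter] at hx
    have hxK : x ∈ K := by
      have : α ≤ w x := le_of_tendsto htend (Eventually.of_forall fun n => (hx n).1)
      exact this
    exact (hx 0).2 (hKU hxK)
  have hsubU : {x | β' n ≤ w x} ⊆ U := by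
    intro x hx
    by_contra hxU
    exact hn ⟨x, hx, hxU⟩
  have hmem : Set.Ioi (β' n) ∈ nhdsWithin α (Set.Ioo 0 α) :=
    mem_nhdsWithin_of_mem_nhds (Ioi_mem_nhds (hβ'lt n))
  filter_upwards [hmem, self_mem_nhdsWithin] with β hβ hβIoo
  -- β' n < β < α
  have hKsub : K ⊆ {x | β ≤ w x} := fun x hx => le_trans hβIoo.2.le hx
  have hsub2 : {x | β ≤ w x} ⊆ U := fun x hx => hsubU (show β' n ≤ w x from le_trans (le_of_lt hβ) hx)
  apply EMetric.hausdorffEdist_le_of_mem_edist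
  · intro x hx
    have : EMetric.infEdist x K < ENNReal.ofReal δ := hsub2 hx
    obtain ⟨y, hyK, hy⟩ := EMetric.infEdist_lt_iff.1 this
    exact ⟨y, hyK, le_trans hy.le hδ⟩
  · intro x hx
    exact ⟨x, hKsub hx, by simp⟩

/-- For normal fuzzy sets `u, v` in a metric space with nonempty compact level sets,
the function `α ↦ H([u]_α, [v]_α)` is left continuous at every `α ∈ (0,1]`. -/
theorem stmt_7 {X : Type*} [MetricSpace X] (u v : X → ℝ)
    (hu01 : ∀ x, u x ∈ Set.Icc (0 : ℝ) 1) (hv01 : ∀ x, v x ∈ Set.Icc (0 : ℝ) 1)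
    (hu : ∀ α ∈ Set.Ioc (0 : ℝ) 1, {x | α ≤ u x}.Nonempty ∧ IsCompact {x | α ≤ u x})
    (hv : ∀ α ∈ Set.Ioc (0 : ℝ) 1, {x | α ≤ v x}.Nonempty ∧ IsCompact {x | α ≤ v x}) :
    ∀ α ∈ Set.Ioc (0 : ℝ) 1,
      Filter.Tendsto (fun β : ℝ => EMetric.hausdorffEdist {x | β ≤ u x} {x | β ≤ v x})
        (nhdsWithin α (Set.Ioo 0 α))
        (nhds (EMetric.hausdorffEdist {x | α ≤ u x} {x | α ≤ v x})) := by
  intro α hα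
  set Ku := {x | α ≤ u x} with hKu
  set Kv := {x | α ≤ v x} with hKv
  set D := EMetric.hausdorffEdist Ku Kv with hD
  have hDne : D ≠ ⊤ :=
    Metric.hausdorffEdist_ne_top_of_nonempty_of_bounded (hu α hα).1 (hv α hα).1
      (hu α hα).2.isBounded (hv α hα).2.isBounded
  rw [ENNReal.tendsto_nhds hDne]
  intro ε hε
  have hε2 : (0:ℝ≥0∞) < ε / 2 := ENNReal.half_pos hε.ne'
  filter_upwards [key_left u hu hα hε2, key_left v hv hα hε2, self_mem_nhdsWithin]
    with β hbu hbv hβIoo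
  constructor
  · -- D - ε ≤ f β
    rw [tsub_le_iff_right]
    calc D ≤ EMetric.hausdorffEdist Ku {x | β ≤ u x}
            + EMetric.hausdorffEdist {x | β ≤ u x} Kv := EMetric.hausdorffEdist_triangle
    _ ≤ EMetric.hausdorffEdist Ku {x | β ≤ u x}
        + (EMetric.hausdorffEdist {x | β ≤ u x} {x | β ≤ v x}
          + EMetric.hausdorffEdist {x | β ≤ v x} Kv) :=
        add_le_add_right EMetric.hausdorffEdist_triangle _
    _ ≤ ε / 2 + (EMetric.hausdorffEdist {x | β ≤ u x} {x | β ≤ v x} + ε / 2) :=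
        add_le_add (by exact EMetric.hausdorffEdist_comm.trans_le hbu)
          (add_le_add_right hbv _)
    _ = EMetric.hausdorffEdist {x | β ≤ u x} {x | β ≤ v x} + ε := by
        rw [add_comm (ε / 2), add_assoc, ENNReal.add_halves]
  · -- f β ≤ D + ε
    calc EMetric.hausdorffEdist {x | β ≤ u x} {x | β ≤ v x}
        ≤ EMetric.hausdorffEdist {x | β ≤ u x} Ku
          + EMetric.hausdorffEdist Ku {x | β ≤ v x} := EMetric.hausdorffEdist_triangle
    _ ≤ EMetric.hausdorffEdist {x | β ≤ u x} Ku
        + (EMetric.hausdorffEdist Ku Kv + EMetric.hausdorffEdist Kv {x | β ≤ v x}) :=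
        add_le_add_right EMetric.hausdorffEdist_triangle _
    _ ≤ ε / 2 + (D + ε / 2) :=
        add_le_add hbu
          (add_le_add_right (by exact EMetric.hausdorffEdist_comm.trans_le hbv) _)
    _ = D + ε := by rw [add_comm (ε / 2), add_assoc, ENNReal.add_halves]
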